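/- For every Sperner family A = {A_1,...,A_m} of subsets of [n], there exists a distributed secret sharing protocol (satisfying correctness and security) with access structure A; conversely, the access structure of any DSSP must be a Sperner family. Hence the maximum number of users servable with n storage nodes equals C(n, ⌊n/2⌋). -/

import Mathlib

open scoped Classical

/-- The data visible to a user with access set `A`: the user can read the stored symbol
`y r` exactly when `y r` is stored (according to the storing matrix `Z`) on some node of
`A`; other symbols are invisible (`none`). -/
noncomputable def dsspView {n h : ℕ} {F : Type*} (A : Finset (Fin n))
    (Z : Fin n → Fin h → Bool) (y : Fin h → F) : Fin h → Option F :=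
  fun r => if ∃ i ∈ A, Z i r then some (y r) else none

/-- A distributed secret sharing protocol with `n` storage nodes and `m` users over the
finite field `F`: an access structure, an encoder of the `m` independent uniform secrets
into `h` stored symbols, a storing matrix, and decoders such that each user `j` recovers
its own secret `s j` (correctness), while the view of any user `j` is statistically
independent of any other user's secret `s l` (security, i.e. `H(s_l | y_j) = H(s_l)` for
uniform independent secrets, stated here in equivalent counting form). -/
structure DSSP (n m : ℕ) (F : Type*) [Field F] [Fintype F] where
  access : Fin m → Finset (Fin n)
  h : ℕ
  enc : (Fin m → F) → Fin h → F
  stored : Fin n → Fin h → Bool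
  dec : Fin m → (Fin h → Option F) → F
  correct : ∀ (s : Fin m → F) (j : Fin m),
    dec j (dsspView (access j) stored (enc s)) = s j
  secure : ∀ (j l : Fin m), l ≠ j → ∀ (v : Fin h → Option F) (a : F),
    (Fintype.card F) *
        (Finset.univ.filter (fun s : Fin m → F =>
          dsspView (access j) stored (enc s) = v ∧ s l = a)).card =
      (Finset.univ.filter (fun s : Fin m → F =>
          dsspView (access j) stored (enc s) = v)).card

section Aux

set_option linter.unusedSectionVars false

variable {F : Type} [Field F] [Fintype F] {n m : ℕ}

/-- A separating functional for a point outside a subspace. -/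
lemma dssp_dual_sep {V : Type*} [AddCommGroup V] [Module F V]
    (p : Submodule F V) (x : V) (hx : x ∉ p) :
    ∃ f : V →ₗ[F] F, (∀ y ∈ p, f y = 0) ∧ f x ≠ 0 := by
  have hq : p.mkQ x ≠ 0 := by
    simpa [Submodule.mkQ_apply, Submodule.Quotient.mk_eq_zero] using hx
  obtain ⟨g, hg⟩ : ∃ g : Module.Dual F (V ⧸ p), g (p.mkQ x) ≠ 0 := by
    by_contra hcon
    push_neg at hcon
    exact hq ((Module.forall_dual_apply_eq_zero_iff F _).mp hcon)
  refine ⟨g.comp p.mkQ, fun y hy => ?_, hg⟩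
  have hy0 : p.mkQ y = 0 := by
    simpa [Submodule.mkQ_apply, Submodule.Quotient.mk_eq_zero] using hy
  simp [hy0]

/-- Existence of the row vectors for user `j`. -/
lemma dssp_exists_row (A : Fin m → Finset (Fin n)) (j : Fin m)
    (hne : (A j).Nonempty) (hsp : ∀ l, l ≠ j → ¬ A j ⊆ A l)
    (hm : ((m : F) - 1) ≠ 0 ∨ ∀ l : Fin m, l = j) :
    ∃ u : Fin n → Fin m → F,
      (∑ i ∈ A j, u i) = Pi.single j 1 ∧
      (∀ i l, i ∈ A l → ∑ j' ∈ Finset.univ.erase l, u i j' = 0) := by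
  obtain ⟨i₀, hi₀⟩ := hne
  rcases hm with hm | hm
  · -- main case via duality
    classical
    set Q : Submodule F (Fin n → Fin m → F) :=
      { carrier := {u | (∀ i, i ∉ A j → u i = 0) ∧
          ∀ i l, i ∈ A l → ∑ j' ∈ Finset.univ.erase l, u i j' = 0}
        add_mem' := by
          rintro a b ⟨ha1, ha2⟩ ⟨hb1, hb2⟩
          refine ⟨fun i hi => by simp [ha1 i hi, hb1 i hi], fun i l hil => ?_⟩
          simp [Finset.sum_add_distrib, ha2 i l hil, hb2 i l hil]
        zero_mem' := by simp
        smul_mem' := by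
          rintro c a ⟨ha1, ha2⟩
          refine ⟨fun i hi => by simp [ha1 i hi], fun i l hil => ?_⟩
          simp [smul_eq_mul, ← Finset.mul_sum, ha2 i l hil] } with hQ
    set Φ : (Fin n → Fin m → F) →ₗ[F] (Fin m → F) :=
      { toFun := fun u => ∑ i : Fin n, u i
        map_add' := by intro a b; simp [Finset.sum_add_distrib]
        map_smul' := by intro c a; simp [Finset.smul_sum] } with hΦ
    have hmem : Pi.single j (1 : F) ∈ Q.map Φ := by
      by_contra hx
      obtain ⟨f, hf0, hfx⟩ := dssp_dual_sep (Q.map Φ) _ hx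
      -- key: f vanishes on all admissible single-node vectors
      have hkey : ∀ i ∈ A j, ∀ w : Fin m → F,
          (∀ l, i ∈ A l → ∑ j' ∈ Finset.univ.erase l, w j' = 0) → f w = 0 := by
        intro i hi w hw
        apply hf0
        refine ⟨(fun i' => if i' = i then w else 0), ⟨fun i' hi' => ?_, fun i' l hil => ?_⟩, ?_⟩
        · rcases eq_or_ne i' i with rfl | hne'
          · exact absurd hi hi'
          · simp [hne']
        · rcases eq_or_ne i' i with rfl | hne'
          · simpa using hw l hil
          · simp [hne']
        · have hval : ∑ i' : Fin n, (if i' = i then w else 0)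
              = if i ∈ Finset.univ then w else 0 :=
            Finset.sum_ite_eq' Finset.univ i (fun _ => w)
          simpa [hΦ] using hval
      set c : Fin m → F := fun l => f (Pi.single l 1) with hc
      set S : F := f (fun _ => (1 : F)) with hS
      have hSsum : S = ∑ l, c l := by
        have h1 : (fun _ => (1 : F)) = ∑ l : Fin m, (Pi.single l 1 : Fin m → F) := by
          funext x
          rw [Finset.sum_apply]
          simp [Finset.sum_pi_single]
        rw [hS, h1, map_sum]
      have hmain : ∀ l, l ≠ j → ((m : F) - 1) * c l = S := by
        intro l hl
        obtain ⟨i, hij, hil⟩ := Finset.not_subset.mp (hsp l hl)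
        set B : Finset (Fin m) := Finset.univ.filter (fun l' => i ∈ A l') with hB
        have hjB : j ∈ B := by simp [hB, hij]
        have hlB : l ∉ B := by simp [hB, hil]
        have hcond : ∀ w : Fin m → F, (∀ l' ∈ B, (∑ j', w j') - w l' = 0) →
            (∀ l', i ∈ A l' → ∑ j' ∈ Finset.univ.erase l', w j' = 0) := by
          intro w hw l' hil'
          have hl'B : l' ∈ B := by simp [hB, hil']
          rw [Finset.sum_erase_eq_sub (Finset.mem_univ l')]
          exact hw l' hl'B
        -- (a) coordinates outside B all equal c l
        have hdiff : ∀ b, b ∉ B → c b = c l := by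
          intro b hb
          have h0 : f (Pi.single b 1 - Pi.single l 1) = 0 := by
            apply hkey i hij
            apply hcond
            intro l' hl'B
            have hbl' : l' ≠ b := fun h => hb (h ▸ hl'B)
            have hll' : l' ≠ l := fun h => hlB (h ▸ hl'B)
            simp only [Pi.sub_apply]
            rw [Finset.sum_sub_distrib]
            simp [Finset.sum_pi_single', Pi.single_apply, hbl', hll']
          have h1 := map_sub f (Pi.single b 1) (Pi.single l 1)
          rw [h0] at h1
          exact sub_eq_zero.mp h1.symm
        -- (b) the balanced vector supported on B ∪ {l}
        set w₀ : Fin m → F :=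
          (∑ b ∈ B, (Pi.single b 1 : Fin m → F))
            + (1 - (B.card : F)) • (Pi.single l 1 : Fin m → F) with hw₀
        have hw₀app : ∀ x, w₀ x =
            (if x ∈ B then (1 : F) else 0) + (if x = l then 1 - (B.card : F) else 0) := by
          intro x
          rw [hw₀]
          simp [Finset.sum_apply, Finset.sum_pi_single, Pi.single_apply, mul_ite]
        have h0 : f w₀ = 0 := by
          apply hkey i hij
          apply hcond
          intro l' hl'B
          have hll' : l' ≠ l := fun h => hlB (h ▸ hl'B)
          have htot : ∑ j', w₀ j' = 1 := by
            simp only [hw₀app]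
            rw [Finset.sum_add_distrib]
            rw [Finset.sum_ite_mem Finset.univ B (fun _ => (1 : F))]
            rw [Finset.univ_inter, Finset.sum_const]
            rw [Finset.sum_ite_eq' Finset.univ l (fun _ => 1 - (B.card : F))]
            simp only [Finset.mem_univ, if_true, nsmul_eq_mul, mul_one]
            ring
          rw [htot, hw₀app l', if_pos hl'B, if_neg hll']
          ring
        have hfw₀ : (∑ b ∈ B, c b) + (1 - (B.card : F)) * c l = 0 := by
          rw [hw₀] at h0
          simpa [map_sum, map_add, map_smul, smul_eq_mul, hc] using h0
        -- (c) assemble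
        have hsplit : S = (∑ b ∈ B, c b) + ∑ b ∈ Bᶜ, c b := by
          rw [hSsum, ← Finset.sum_add_sum_compl B c]
        have hcompl : ∑ b ∈ Bᶜ, c b = ((Bᶜ.card : ℕ) : F) * c l := by
          rw [Finset.sum_congr rfl (fun b hb => hdiff b (by simpa using hb))]
          simp [Finset.sum_const, nsmul_eq_mul]
        have hcardc : ((Bᶜ.card : ℕ) : F) = (m : F) - (B.card : F) := by
          rw [Finset.card_compl]
          have hle : B.card ≤ Fintype.card (Fin m) := Finset.card_le_univ B
          rw [Nat.cast_sub hle]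
          simp [Fintype.card_fin]
        rw [hsplit, hcompl, hcardc]
        linear_combination -hfw₀
      -- conclude c j = 0, contradiction
      have hsum : ∑ l ∈ Finset.univ.erase j, (((m : F) - 1) * c l)
          = ∑ l ∈ Finset.univ.erase j, S :=
        Finset.sum_congr rfl (fun l hl => hmain l (Finset.mem_erase.mp hl).1)
      have hL : ∑ l ∈ Finset.univ.erase j, (((m : F) - 1) * c l)
          = ((m : F) - 1) * (S - c j) := by
        rw [← Finset.mul_sum, Finset.sum_erase_eq_sub (Finset.mem_univ j), ← hSsum]
      have hm1 : 1 ≤ m := Fin.pos j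
      have hR : ∑ l ∈ Finset.univ.erase j, S = ((m : F) - 1) * S := by
        rw [Finset.sum_const, Finset.card_erase_of_mem (Finset.mem_univ j)]
        have hcast : (((Finset.univ : Finset (Fin m)).card - 1 : ℕ) : F) = (m : F) - 1 := by
          rw [Finset.card_univ, Fintype.card_fin, Nat.cast_sub hm1]
          simp
        rw [nsmul_eq_mul, hcast]
      have hcj : ((m : F) - 1) * c j = 0 := by
        have h2 := hL.symm.trans (hsum.trans hR)
        linear_combination -h2
      exact hfx (by
        have := (mul_eq_zero.mp hcj).resolve_left hm
        simpa [hc] using this)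
    obtain ⟨u, hu, hΦu⟩ := hmem
    obtain ⟨hu1, hu2⟩ := hu
    refine ⟨u, ?_, hu2⟩
    rw [Finset.sum_subset (Finset.subset_univ (A j)) (fun i _ hi => hu1 i hi)]
    exact hΦu
  · -- degenerate case : only one user
    refine ⟨fun i => if i = i₀ then Pi.single j 1 else 0, ?_, ?_⟩
    · have h1 : ∑ i ∈ A j, (if i = i₀ then (Pi.single j 1 : Fin m → F) else 0)
          = if i₀ ∈ A j then (Pi.single j 1 : Fin m → F) else 0 :=
        Finset.sum_ite_eq' (A j) i₀ (fun _ => (Pi.single j 1 : Fin m → F))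
      simpa [hi₀] using h1
    · intro i l hil
      have hemp : Finset.univ.erase l = (∅ : Finset (Fin m)) := by
        rw [Finset.eq_empty_iff_forall_notMem]
        intro x hx
        rcases Finset.mem_erase.mp hx with ⟨hxl, _⟩
        exact hxl ((hm x).trans (hm l).symm)
      simp [hemp]


/-- The encoder: stored symbol indexed by `(j,i)` carries the linear combination `R j i ⬝ s`. -/
noncomputable def dsspEnc (R : Fin m → Fin n → Fin m → F) (s : Fin m → F) (r : Fin (m * n)) : F :=
  ∑ j', R (finProdFinEquiv.symm r).1 (finProdFinEquiv.symm r).2 j' * s j'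

/-- The storing matrix: symbol `(j,i)` is stored exactly on node `i`. -/
def dsspStored (n m : ℕ) : Fin n → Fin (m * n) → Bool :=
  fun i r => decide ((finProdFinEquiv.symm r).2 = i)

/-- The decoder for user `j`: sum the symbols `(j,i)`, `i ∈ A j`. -/
noncomputable def dsspDec (A : Fin m → Finset (Fin n)) (j : Fin m)
    (v : Fin (m * n) → Option F) : F :=
  ∑ i ∈ A j, (v (finProdFinEquiv (j, i))).getD 0

lemma dsspView_eq (A : Finset (Fin n)) (y : Fin (m * n) → F) (r : Fin (m * n)) :
    dsspView A (dsspStored n m) y r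
      = if (finProdFinEquiv.symm r).2 ∈ A then some (y r) else none := by
  unfold dsspView dsspStored
  by_cases h : (finProdFinEquiv.symm r).2 ∈ A
  · rw [if_pos h, if_pos ⟨(finProdFinEquiv.symm r).2, h, by simp⟩]
  · rw [if_neg h, if_neg ?_]
    rintro ⟨i, hi, hd⟩
    have hd' : (finProdFinEquiv.symm r).2 = i := of_decide_eq_true hd
    exact h (hd' ▸ hi)

lemma dssp_correct (A : Fin m → Finset (Fin n)) (R : Fin m → Fin n → Fin m → F)
    (hR1 : ∀ j : Fin m, ∑ i ∈ A j, R j i = Pi.single j 1)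
    (s : Fin m → F) (j : Fin m) :
    dsspDec A j (dsspView (A j) (dsspStored n m) (dsspEnc R s)) = s j := by
  unfold dsspDec
  have hterm : ∀ i ∈ A j,
      (dsspView (A j) (dsspStored n m) (dsspEnc R s) (finProdFinEquiv (j, i))).getD 0
        = ∑ j', R j i j' * s j' := by
    intro i hi
    rw [dsspView_eq]
    simp [Equiv.symm_apply_apply, hi, dsspEnc]
  rw [Finset.sum_congr rfl hterm, Finset.sum_comm]
  have hcol : ∀ j' : Fin m, ∑ i ∈ A j, R j i j' * s j'
      = (Pi.single j 1 : Fin m → F) j' * s j' := by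
    intro j'
    rw [← Finset.sum_mul]
    congr 1
    calc ∑ i ∈ A j, R j i j' = (∑ i ∈ A j, R j i) j' := (Finset.sum_apply j' (A j) (R j)).symm
      _ = (Pi.single j 1 : Fin m → F) j' := by rw [hR1 j]
  rw [Finset.sum_congr rfl (fun j' _ => hcol j')]
  simp [Pi.single_apply, ite_mul, Finset.sum_ite_eq]

lemma dssp_secure (A : Fin m → Finset (Fin n)) (R : Fin m → Fin n → Fin m → F)
    (hR2 : ∀ j i l, i ∈ A l → ∑ j' ∈ Finset.univ.erase l, R j i j' = 0)
    (j l : Fin m) (hlj : l ≠ j) (v : Fin (m * n) → Option F) (a : F) :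
    (Fintype.card F) * (Finset.univ.filter (fun s : Fin m → F =>
        dsspView (A j) (dsspStored n m) (dsspEnc R s) = v ∧ s l = a)).card
      = (Finset.univ.filter (fun s : Fin m → F =>
        dsspView (A j) (dsspStored n m) (dsspEnc R s) = v)).card := by
  classical
  set kst : Fin m → F := fun j' => if j' = j then 0 else 1 with hkst
  have hview : ∀ (s : Fin m → F) (c : F),
      dsspView (A j) (dsspStored n m) (dsspEnc R (s + c • kst))
        = dsspView (A j) (dsspStored n m) (dsspEnc R s) := by
    intro s c
    funext r
    rw [dsspView_eq, dsspView_eq]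
    by_cases h : (finProdFinEquiv.symm r).2 ∈ A j
    · rw [if_pos h, if_pos h]
      congr 1
      unfold dsspEnc
      set j₁ := (finProdFinEquiv.symm r).1 with hj₁
      set i₁ := (finProdFinEquiv.symm r).2 with hi₁
      have hz : ∑ j' : Fin m, R j₁ i₁ j' * (c • kst) j' = 0 := by
        have hsplit : ∑ j' : Fin m, R j₁ i₁ j' * (c • kst) j'
            = ∑ j' ∈ Finset.univ.erase j, R j₁ i₁ j' * (c • kst) j'
              + R j₁ i₁ j * (c • kst) j :=
          (Finset.sum_erase_add _ _ (Finset.mem_univ j)).symm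
        have h1 : ∀ j' ∈ Finset.univ.erase j,
            R j₁ i₁ j' * (c • kst) j' = c * R j₁ i₁ j' := by
          intro j' hj'
          rcases Finset.mem_erase.mp hj' with ⟨hne, _⟩
          simp [hkst, hne]
          ring
        rw [hsplit, Finset.sum_congr rfl h1, ← Finset.mul_sum, hR2 j₁ i₁ j h]
        simp [hkst]
      calc ∑ j', R j₁ i₁ j' * (s + c • kst) j'
          = ∑ j', (R j₁ i₁ j' * s j' + R j₁ i₁ j' * (c • kst) j') := by
            apply Finset.sum_congr rfl
            intro j' _
            simp [mul_add]
        _ = (∑ j', R j₁ i₁ j' * s j') + ∑ j', R j₁ i₁ j' * (c • kst) j' :=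
            Finset.sum_add_distrib
        _ = ∑ j', R j₁ i₁ j' * s j' := by rw [hz, add_zero]
    · rw [if_neg h, if_neg h]
  have hkl : kst l = 1 := by simp [hkst, hlj]
  have hslmap : ∀ (s : Fin m → F) (c : F), (s + c • kst) l = s l + c := by
    intro s c
    simp [hkl]
  have hcardeq : ∀ a b : F,
      (Finset.univ.filter (fun s : Fin m → F =>
        dsspView (A j) (dsspStored n m) (dsspEnc R s) = v ∧ s l = a)).card
      = (Finset.univ.filter (fun s : Fin m → F =>
        dsspView (A j) (dsspStored n m) (dsspEnc R s) = v ∧ s l = b)).card := by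
    intro a b
    have hinv : ∀ (s : Fin m → F) (c d : F), s + c • kst + d • kst = s + (c + d) • kst := by
      intro s c d
      rw [add_assoc, ← add_smul]
    apply Finset.card_bij' (fun s _ => s + (b - a) • kst) (fun s _ => s + (a - b) • kst)
    · intro s hs
      rw [Finset.mem_filter] at hs ⊢
      refine ⟨Finset.mem_univ _, ?_, ?_⟩
      · rw [hview, hs.2.1]
      · rw [hslmap, hs.2.2]; ring
    · intro s hs
      rw [Finset.mem_filter] at hs ⊢
      refine ⟨Finset.mem_univ _, ?_, ?_⟩
      · rw [hview, hs.2.1]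
      · rw [hslmap, hs.2.2]; ring
    · intro s _
      rw [hinv]
      have : (b - a) + (a - b) = 0 := by ring
      rw [this, zero_smul, add_zero]
    · intro s _
      rw [hinv]
      have : (a - b) + (b - a) = 0 := by ring
      rw [this, zero_smul, add_zero]
  have hfib := Finset.card_eq_sum_card_fiberwise (f := fun s : Fin m → F => s l)
      (s := Finset.univ.filter (fun s : Fin m → F =>
        dsspView (A j) (dsspStored n m) (dsspEnc R s) = v))
      (t := Finset.univ) (fun x _ => Finset.mem_univ _)
  rw [hfib]
  have hconst : ∀ b ∈ (Finset.univ : Finset F),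
      ((Finset.univ.filter (fun s : Fin m → F =>
        dsspView (A j) (dsspStored n m) (dsspEnc R s) = v)).filter
          (fun s => s l = b)).card
      = (Finset.univ.filter (fun s : Fin m → F =>
        dsspView (A j) (dsspStored n m) (dsspEnc R s) = v ∧ s l = a)).card := by
    intro b _
    rw [Finset.filter_filter]
    exact hcardeq b a
  rw [Finset.sum_congr rfl hconst, Finset.sum_const, Finset.card_univ, nsmul_eq_mul]
  simp

end Aux

/-- Part (i): every Sperner family of nonempty sets is the access structure of a DSSP. -/
lemma dssp_part1 (n m : ℕ) (A : Fin m → Finset (Fin n))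
    (hne : ∀ j, (A j).Nonempty) (hsp : ∀ j l, j ≠ l → ¬ A j ⊆ A l) :
    ∃ (F : Type) (instF : Field F) (instT : Fintype F) (P : @DSSP n m F instF instT),
      P.access = A := by
  obtain ⟨p, hpm, hpp⟩ := Nat.exists_infinite_primes (m + 1)
  haveI : Fact p.Prime := ⟨hpp⟩
  haveI : NeZero p := ⟨hpp.pos.ne'⟩
  have hm : ((m : ZMod p) - 1) ≠ 0 ∨ ∀ l jj : Fin m, l = jj := by
    match m, hpm with
    | 0, hpm =>
      left
      simp only [Nat.cast_zero, zero_sub]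
      exact neg_ne_zero.mpr one_ne_zero
    | 1, hpm => exact Or.inr (fun l jj => Subsingleton.elim l jj)
    | (k + 2), hpm =>
      left
      intro h0
      have h1 : (((k + 2 : ℕ) - 1 : ℕ) : ZMod p) = ((k + 2 : ℕ) : ZMod p) - 1 := by
        rw [Nat.cast_sub (by omega)]
        simp
      rw [← h1] at h0
      have hdvd : p ∣ (k + 2) - 1 := (ZMod.natCast_eq_zero_iff _ _).mp h0
      have := Nat.le_of_dvd (by omega) hdvd
      omega
  have hrow : ∀ j : Fin m, ∃ u : Fin n → Fin m → ZMod p,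
      (∑ i ∈ A j, u i) = Pi.single j 1 ∧
      (∀ i l, i ∈ A l → ∑ j' ∈ Finset.univ.erase l, u i j' = 0) := by
    intro j
    refine dssp_exists_row A j (hne j) (fun l hl => hsp j l (Ne.symm hl)) ?_
    exact hm.imp id (fun h => fun l => h l j)
  choose R hR1 hR2 using hrow
  exact ⟨ZMod p, inferInstance, inferInstance,
    ⟨A, m * n, dsspEnc R, dsspStored n m, dsspDec A,
      fun s j => dssp_correct A R hR1 s j,
      fun j l hlj v a => dssp_secure A R hR2 j l hlj v a⟩, rfl⟩

/-- Part (ii): the access structure of any DSSP is a Sperner family. -/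
lemma dssp_part2 {n m : ℕ} {F : Type} [Field F] [Fintype F] (P : DSSP n m F)
    (j l : Fin m) (hjl : j ≠ l) : ¬ P.access j ⊆ P.access l := by
  intro hsub
  classical
  set f : (Fin P.h → Option F) → (Fin P.h → Option F) :=
    fun w r => if ∃ i ∈ P.access j, P.stored i r then w r else none with hf
  have hfv : ∀ s : Fin m → F,
      f (dsspView (P.access l) P.stored (P.enc s))
        = dsspView (P.access j) P.stored (P.enc s) := by
    intro s
    funext r
    by_cases hc : ∃ i ∈ P.access j, P.stored i r
    · obtain ⟨i, hi, hst⟩ := hc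
      have hcj : ∃ i ∈ P.access j, P.stored i r := ⟨i, hi, hst⟩
      have hcl : ∃ i ∈ P.access l, P.stored i r := ⟨i, hsub hi, hst⟩
      simp only [hf]
      rw [if_pos hcj]
      unfold dsspView
      rw [if_pos hcl, if_pos hcj]
    · simp only [hf]
      rw [if_neg hc]
      unfold dsspView
      rw [if_neg hc]
  set v := dsspView (P.access l) P.stored (P.enc (fun _ => 0)) with hv
  set b := P.dec j (f v) with hb
  have hsb : ∀ s : Fin m → F,
      dsspView (P.access l) P.stored (P.enc s) = v → s j = b := by
    intro s hs
    rw [← P.correct s j, ← hfv s, hs]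
  obtain ⟨a, ha⟩ := exists_ne b
  have hsec := P.secure l j hjl v a
  have hzero : (Finset.univ.filter (fun s : Fin m → F =>
      dsspView (P.access l) P.stored (P.enc s) = v ∧ s j = a)) = ∅ := by
    rw [Finset.eq_empty_iff_forall_notMem]
    intro s hs
    rw [Finset.mem_filter] at hs
    exact ha ((hs.2.2).symm.trans (hsb s hs.2.1))
  have hpos : (fun _ => (0 : F)) ∈ Finset.univ.filter (fun s : Fin m → F =>
      dsspView (P.access l) P.stored (P.enc s) = v) := by
    rw [Finset.mem_filter]
    exact ⟨Finset.mem_univ _, hv.symm⟩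
  rw [hzero, Finset.card_empty, Nat.mul_zero] at hsec
  have hcardpos := Finset.card_pos.mpr ⟨_, hpos⟩
  omega

/-- (i) For every Sperner family `A_1, …, A_m` of nonempty subsets of `[n]` there is a
distributed secret sharing protocol (over a suitable finite field) with access structure
`A`; (ii) conversely, the access structure of any DSSP must be a Sperner family; hence
(iii) the maximum number of users servable with `n` storage nodes is `C(n, ⌊n/2⌋)`. -/
theorem dssp_iff_sperner_and_max_users (n : ℕ) (hn : 0 < n) :
    (∀ (m : ℕ) (A : Fin m → Finset (Fin n)),
      (∀ j, (A j).Nonempty) →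
      (∀ j l, j ≠ l → ¬ A j ⊆ A l) →
      ∃ (F : Type) (instF : Field F) (instT : Fintype F) (P : @DSSP n m F instF instT),
        P.access = A) ∧
    (∀ (m : ℕ) (F : Type) (instF : Field F) (instT : Fintype F)
        (P : @DSSP n m F instF instT) (j l : Fin m), j ≠ l → ¬ P.access j ⊆ P.access l) ∧
    IsGreatest
      {m : ℕ | ∃ (F : Type) (instF : Field F) (instT : Fintype F),
        Nonempty (@DSSP n m F instF instT)}
      (n.choose (n / 2)) := by
  classical
  refine ⟨fun m A hne hsp => dssp_part1 n m A hne hsp,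
    fun m F iF iT P j l hjl => dssp_part2 P j l hjl, ?_, ?_⟩
  · -- membership: a DSSP with `C(n, n/2)` users
    set k := n - n / 2 with hk
    have hcard : Fintype.card {s : Finset (Fin n) // s.card = k}
        = n.choose (n / 2) := by
      rw [Fintype.card_finset_len, Fintype.card_fin, hk,
        Nat.choose_symm (Nat.div_le_self n 2)]
    let eqv : Fin (n.choose (n / 2)) ≃ {s : Finset (Fin n) // s.card = k} :=
      (Fintype.equivFinOfCardEq hcard).symm
    set A : Fin (n.choose (n / 2)) → Finset (Fin n) := fun j => (eqv j).1 with hA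
    have hkpos : 0 < k := by
      have := Nat.div_lt_self hn (by norm_num : 1 < 2)
      omega
    have hne : ∀ j, (A j).Nonempty := by
      intro j
      rw [← Finset.card_pos, hA]
      rw [(eqv j).2]
      exact hkpos
    have hsp : ∀ j l, j ≠ l → ¬ A j ⊆ A l := by
      intro j l hjl hsub
      have hcc : (A l).card ≤ (A j).card := by
        rw [hA, (eqv j).2, (eqv l).2]
      have heq : A j = A l := Finset.eq_of_subset_of_card_le hsub hcc
      exact hjl (eqv.injective (Subtype.ext heq))
    obtain ⟨F, iF, iT, P, hP⟩ := dssp_part1 n _ A hne hsp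
    exact ⟨F, iF, iT, ⟨P⟩⟩
  · -- upper bound via Sperner's theorem
    rintro m ⟨F, iF, iT, ⟨P⟩⟩
    have hinj : Function.Injective P.access := by
      intro j l h
      by_contra hjl
      exact dssp_part2 P j l hjl (h ▸ subset_rfl)
    set 𝒜 : Finset (Finset (Fin n)) := Finset.univ.image P.access with h𝒜
    have hanti : IsAntichain (· ⊆ ·) (𝒜 : Set (Finset (Fin n))) := by
      intro x hx y hy hxy hsub
      rw [h𝒜] at hx hy
      simp only [Finset.coe_image, Set.mem_image, Finset.coe_univ, Set.image_univ,
        Set.mem_range] at hx hy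
      obtain ⟨j, hj⟩ := hx
      obtain ⟨l, hl⟩ := hy
      subst hj; subst hl
      exact dssp_part2 P j l (fun h => hxy (by rw [h])) hsub
    have hcard : 𝒜.card = m := by
      rw [h𝒜, Finset.card_image_of_injective _ hinj, Finset.card_univ, Fintype.card_fin]
    have hsperner := IsAntichain.sperner hanti
    rw [hcard, Fintype.card_fin] at hsperner
    exact hsperner
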